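/- arXiv:math/9902042 — 2 statements merged into one kernel-verified Lean document; each statement's English description precedes it below -/
import Mathlib

section
/- With the linear forms ℓ_1,…,ℓ_r, the set S, and the sets U_k(α,β), U_k(α), U(α) as in the context, let p ∉ S be a prime, ψ a standard additive character of ℚ_p, and a = (a_1,a_2) ∈ ℤ² such that p does not divide a_k a_2 − b_k a_1 for any 1 ≤ k ≤ r. Then: (i) ∫_{U_k(α,β)} ψ_a dμ = 0 for all 1 ≤ k ≤ r and α > β ≥ 1; (ii) ∫_{U_k(α)} ψ_a dμ = −1 if α = 1 and = 0 if α ≥ 2; (iii) ∫_{U(α)} ψ_a dμ = r − 1 if α = 1 and = 0 if α ≥ 2. -/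
open MeasureTheory

noncomputable instance (p : ℕ) [Fact p.Prime] : MeasurableSpace ℚ_[p] := borel _
instance (p : ℕ) [Fact p.Prime] : BorelSpace ℚ_[p] := ⟨rfl⟩

/-- `U_k(α,β) = {x ∈ ℚ_p² : ‖x‖_p = p^α, |a x₁ + b x₂|_p = p^(α-β)}`. -/
def Uab (p : ℕ) [Fact p.Prime] (a b : ℤ) (α β : ℕ) : Set (ℚ_[p] × ℚ_[p]) :=
  {x | max ‖x.1‖ ‖x.2‖ = (p : ℝ) ^ α ∧
    ‖(a : ℚ_[p]) * x.1 + (b : ℚ_[p]) * x.2‖ = (p : ℝ) ^ (α - β)}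

/-- `U_k(α) = {x ∈ ℚ_p² : ‖x‖_p = p^α, |a x₁ + b x₂|_p ≤ 1}`. -/
def Ua (p : ℕ) [Fact p.Prime] (a b : ℤ) (α : ℕ) : Set (ℚ_[p] × ℚ_[p]) :=
  {x | max ‖x.1‖ ‖x.2‖ = (p : ℝ) ^ α ∧ ‖(a : ℚ_[p]) * x.1 + (b : ℚ_[p]) * x.2‖ ≤ 1}

/-- `U(α) = {x ∈ ℚ_p² : ‖x‖_p = p^α, |ℓ_j(x)|_p = p^α for all j}`. -/
def Utot (p : ℕ) [Fact p.Prime] {r : ℕ} (a b : Fin r → ℤ) (α : ℕ) :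
    Set (ℚ_[p] × ℚ_[p]) :=
  {x | max ‖x.1‖ ‖x.2‖ = (p : ℝ) ^ α ∧
    ∀ j, ‖(a j : ℚ_[p]) * x.1 + (b j : ℚ_[p]) * x.2‖ = (p : ℝ) ^ α}

section AuxStmt10
variable {p : ℕ} [hp : Fact p.Prime]

lemma aux_norm_le_one_of_lt_p {v : ℚ_[p]} (h : ‖v‖ < p) : ‖v‖ ≤ 1 := by
  by_contra h1
  push_neg at h1
  have hv : v ≠ 0 := by
    rintro rfl; simp at h1; linarith
  have hp1 : (1:ℝ) < p := by exact_mod_cast hp.out.one_lt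
  rw [Padic.norm_eq_zpow_neg_valuation hv] at h h1
  have h2 : (0:ℤ) < -v.valuation := by
    have := h1
    rw [show (1:ℝ) = (p:ℝ) ^ (0:ℤ) by simp] at this
    exact (zpow_lt_zpow_iff_right₀ hp1).mp this
  have h3 : -v.valuation < 1 :=
    (zpow_lt_zpow_iff_right₀ hp1).mp (by rw [zpow_one]; exact h)
  omega

lemma aux_norm_int_unit {d : ℤ} (hd : ¬ ((p:ℤ) ∣ d)) : ‖(d : ℚ_[p])‖ = 1 :=
  le_antisymm (Padic.norm_int_le_one d)
    (not_lt.mp fun h => hd (Padic.norm_intCast_lt_one_iff.mp h))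

lemma aux_psi_pow (ψ : ℚ_[p] → ℂ)
    (hψadd : ∀ x y : ℚ_[p], ψ (x + y) = ψ x * ψ y)
    (hψtriv : ∀ x : ℚ_[p], ‖x‖ ≤ 1 → ψ x = 1)
    (u : ℚ_[p]) : ∀ n : ℕ, ψ ((n : ℚ_[p]) * u) = ψ u ^ n := by
  intro n
  induction n with
  | zero => simp [hψtriv 0 (by simp)]
  | succ n ih =>
    have : ((n+1 : ℕ) : ℚ_[p]) * u = (n : ℚ_[p]) * u + u := by push_cast; ring
    rw [this, hψadd, ih, pow_succ]

lemma aux_psi_ne_one (ψ : ℚ_[p] → ℂ)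
    (hψadd : ∀ x y : ℚ_[p], ψ (x + y) = ψ x * ψ y)
    (hψtriv : ∀ x : ℚ_[p], ‖x‖ ≤ 1 → ψ x = 1)
    (hψnontriv : ∃ x : ℚ_[p], ‖x‖ ≤ (p : ℝ) ∧ ψ x ≠ 1)
    (u : ℚ_[p]) (hu : ‖u‖ = p) : ψ u ≠ 1 := by
  intro h1
  obtain ⟨x₀, hx₀, hne⟩ := hψnontriv
  have hp0 : (0:ℝ) < p := by exact_mod_cast hp.out.pos
  have hu0 : u ≠ 0 := by
    intro h; rw [h] at hu; simp at hu; exact absurd hu.symm (ne_of_gt hp0)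
  have hz1 : ‖x₀ / u‖ ≤ 1 := by
    rw [norm_div, hu]; exact div_le_one hp0 |>.mpr hx₀
  set z' : ℤ_[p] := ⟨x₀ / u, hz1⟩ with hz'
  set m : ℕ := PadicInt.zmodRepr z' with hm
  have hsub : ‖x₀ / u - (m : ℚ_[p])‖ < 1 := by
    have h2 := PadicInt.sub_zmodRepr_mem z'
    rw [PadicInt.maximalIdeal_eq_span_p, Ideal.mem_span_singleton,
      ← PadicInt.norm_lt_one_iff_dvd] at h2
    have : ((z' - (m : ℤ_[p]) : ℤ_[p]) : ℚ_[p]) = x₀ / u - (m : ℚ_[p]) := by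
      rw [PadicInt.coe_sub, hz']; push_cast; ring
    rwa [PadicInt.norm_def, this] at h2
  have hwle : ‖(x₀ / u - (m : ℚ_[p])) * u‖ ≤ 1 := by
    apply aux_norm_le_one_of_lt_p
    rw [norm_mul, hu]
    calc ‖x₀ / u - (m:ℚ_[p])‖ * p < 1 * p := by
          exact mul_lt_mul_of_pos_right hsub hp0
      _ = p := one_mul _
  have hx₀eq : x₀ = (m : ℚ_[p]) * u + (x₀ / u - (m : ℚ_[p])) * u := by
    field_simp
    ring
  have : ψ x₀ = 1 := by
    rw [hx₀eq, hψadd, aux_psi_pow ψ hψadd hψtriv u m, h1, one_pow,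
      hψtriv _ hwle, one_mul]
  exact hne this

lemma aux_vanish (μ : Measure (ℚ_[p] × ℚ_[p])) [μ.IsAddRightInvariant]
    (f : ℚ_[p] × ℚ_[p] → ℂ) (U : Set (ℚ_[p] × ℚ_[p])) (hU : MeasurableSet U)
    (t : ℚ_[p] × ℚ_[p]) (hinv : ∀ x, x ∈ U ↔ x + t ∈ U) (w : ℂ) (hw : w ≠ 1)
    (hf : ∀ x, f (x + t) = w * f x) :
    ∫ x in U, f x ∂μ = 0 := by
  have h0 : ∫ x, U.indicator f x ∂μ = ∫ x, U.indicator f (x + t) ∂μ :=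
    (integral_add_right_eq_self (U.indicator f) t).symm
  have h1 : ∀ x, U.indicator f (x + t) = w * U.indicator f x := by
    intro x
    by_cases hx : x ∈ U
    · rw [Set.indicator_of_mem ((hinv x).mp hx) f, Set.indicator_of_mem hx f, hf]
    · rw [Set.indicator_of_notMem (fun h => hx ((hinv x).mpr h)) f,
        Set.indicator_of_notMem hx f, mul_zero]
  have h2 : ∫ x, U.indicator f x ∂μ = w * ∫ x, U.indicator f x ∂μ := by
    conv_lhs => rw [h0]
    simp_rw [h1]
    rw [integral_const_mul]
  have h3 : (1 - w) * ∫ x, U.indicator f x ∂μ = 0 := by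
    linear_combination h2
  rw [← integral_indicator hU]
  rcases mul_eq_zero.mp h3 with h | h
  · exact absurd (sub_eq_zero.mp h).symm hw
  · exact h

lemma aux_lin_le (A B : ℤ) (u v : ℚ_[p]) {R : ℝ} (hu : ‖u‖ ≤ R) (hv : ‖v‖ ≤ R) :
    ‖(A : ℚ_[p]) * u + (B : ℚ_[p]) * v‖ ≤ R := by
  refine le_trans (Padic.nonarchimedean _ _) (max_le ?_ ?_)
  · calc ‖(A : ℚ_[p]) * u‖ = ‖(A : ℚ_[p])‖ * ‖u‖ := norm_mul _ _
      _ ≤ 1 * R := mul_le_mul (Padic.norm_int_le_one A) hu (norm_nonneg u) zero_le_one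
      _ = R := one_mul R
  · calc ‖(B : ℚ_[p]) * v‖ = ‖(B : ℚ_[p])‖ * ‖v‖ := norm_mul _ _
      _ ≤ 1 * R := mul_le_mul (Padic.norm_int_le_one B) hv (norm_nonneg v) zero_le_one
      _ = R := one_mul R

lemma aux_add_norm (x y : ℚ_[p]) (h : ‖y‖ < ‖x‖) : ‖x + y‖ = ‖x‖ := by
  rw [Padic.add_eq_max_of_ne (ne_of_lt h).symm, max_eq_left h.le]

lemma aux_pair_shift {R : ℝ} (x t : ℚ_[p] × ℚ_[p]) (ht1 : ‖t.1‖ < R) (ht2 : ‖t.2‖ < R)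
    (hx : max ‖x.1‖ ‖x.2‖ = R) : max ‖(x + t).1‖ ‖(x + t).2‖ = R := by
  have hadd1 : (x + t).1 = x.1 + t.1 := rfl
  have hadd2 : (x + t).2 = x.2 + t.2 := rfl
  rw [hadd1, hadd2]
  apply le_antisymm
  · refine max_le ?_ ?_
    · exact le_trans (Padic.nonarchimedean _ _)
        (max_le (hx ▸ le_max_left _ _) ht1.le)
    · exact le_trans (Padic.nonarchimedean _ _)
        (max_le (hx ▸ le_max_right _ _) ht2.le)
  · rcases max_choice ‖x.1‖ ‖x.2‖ with h | h
    · have hx1 : ‖x.1‖ = R := h.symm.trans hx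
      have : ‖x.1 + t.1‖ = R := by
        rw [aux_add_norm x.1 t.1 (by rw [hx1]; exact ht1), hx1]
      exact this ▸ le_max_left _ _
    · have hx2 : ‖x.2‖ = R := h.symm.trans hx
      have : ‖x.2 + t.2‖ = R := by
        rw [aux_add_norm x.2 t.2 (by rw [hx2]; exact ht2), hx2]
      exact this ▸ le_max_right _ _

lemma aux_eq_p {v : ℚ_[p]} (h1 : ‖v‖ ≤ p) (h2 : ¬ ‖v‖ ≤ 1) : ‖v‖ = p :=
  le_antisymm h1 (not_lt.mp fun hlt => h2 (aux_norm_le_one_of_lt_p hlt))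

lemma aux_max_eq_p (x : ℚ_[p] × ℚ_[p]) (h1 : max ‖x.1‖ ‖x.2‖ ≤ (p : ℝ))
    (h2 : ¬ max ‖x.1‖ ‖x.2‖ ≤ 1) : max ‖x.1‖ ‖x.2‖ = p := by
  rcases max_choice ‖x.1‖ ‖x.2‖ with h | h <;> rw [h] at h1 h2 ⊢ <;> exact aux_eq_p h1 h2

end AuxStmt10

section MainStmt10
variable {p : ℕ} [hp : Fact p.Prime]

/-- Integrals of a generic character over the pieces `U_k(α,β)`,
`U_k(α)`, `U(α)` at a prime `p` of good reduction. -/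
theorem stmt10 (r : ℕ) (hr : 1 ≤ r) (a b : Fin r → ℤ)
    (hprim : ∀ k, Int.gcd (a k) (b k) = 1)
    (hnonprop : ∀ j k, j ≠ k → a j * b k - a k * b j ≠ 0)
    (p : ℕ) [Fact p.Prime]
    (hpS : ∀ j k, j ≠ k → ¬ ((p : ℤ) ∣ (a j * b k - a k * b j)))
    (μ : Measure (ℚ_[p] × ℚ_[p])) (hμ : μ.IsAddHaarMeasure)
    (hμ1 : μ {x | ‖x.1‖ ≤ 1 ∧ ‖x.2‖ ≤ 1} = 1)
    (ψ : ℚ_[p] → ℂ) (hψcont : Continuous ψ)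
    (hψadd : ∀ x y : ℚ_[p], ψ (x + y) = ψ x * ψ y)
    (hψabs : ∀ x : ℚ_[p], ‖ψ x‖ = 1)
    (hψtriv : ∀ x : ℚ_[p], ‖x‖ ≤ 1 → ψ x = 1)
    (hψnontriv : ∃ x : ℚ_[p], ‖x‖ ≤ (p : ℝ) ∧ ψ x ≠ 1)
    (c : ℤ × ℤ) (hgen : ∀ k, ¬ ((p : ℤ) ∣ (a k * c.2 - b k * c.1))) :
    (∀ k, ∀ α β : ℕ, 1 ≤ β → β < α →
      ∫ x in Uab p (a k) (b k) α β,
        ψ ((c.1 : ℚ_[p]) * x.1 + (c.2 : ℚ_[p]) * x.2) ∂μ = 0) ∧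
    (∀ k,
      (∫ x in Ua p (a k) (b k) 1,
        ψ ((c.1 : ℚ_[p]) * x.1 + (c.2 : ℚ_[p]) * x.2) ∂μ = -1) ∧
      (∀ α : ℕ, 2 ≤ α →
        ∫ x in Ua p (a k) (b k) α,
          ψ ((c.1 : ℚ_[p]) * x.1 + (c.2 : ℚ_[p]) * x.2) ∂μ = 0)) ∧
    ((∫ x in Utot p a b 1,
        ψ ((c.1 : ℚ_[p]) * x.1 + (c.2 : ℚ_[p]) * x.2) ∂μ = (r : ℂ) - 1) ∧
     (∀ α : ℕ, 2 ≤ α →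
        ∫ x in Utot p a b α,
          ψ ((c.1 : ℚ_[p]) * x.1 + (c.2 : ℚ_[p]) * x.2) ∂μ = 0)) := by
  haveI := hμ
  have hp1 : (1:ℝ) < p := by exact_mod_cast (Fact.out : p.Prime).one_lt
  have hp0 : (0:ℝ) < p := lt_trans zero_lt_one hp1
  set f : ℚ_[p] × ℚ_[p] → ℂ :=
    fun x => ψ ((c.1 : ℚ_[p]) * x.1 + (c.2 : ℚ_[p]) * x.2) with hfdef
  have hfc : Continuous f :=
    hψcont.comp ((continuous_const.mul continuous_fst).add
      (by fun_prop : Continuous fun x : ℚ_[p] × ℚ_[p] => (c.2 : ℚ_[p]) * x.2))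
  have hfshift : ∀ t x : ℚ_[p] × ℚ_[p],
      f (x + t) = ψ ((c.1 : ℚ_[p]) * t.1 + (c.2 : ℚ_[p]) * t.2) * f x := by
    intro t x
    show ψ _ = _ * ψ _
    have he : (c.1 : ℚ_[p]) * (x + t).1 + (c.2 : ℚ_[p]) * (x + t).2
        = ((c.1 : ℚ_[p]) * x.1 + (c.2 : ℚ_[p]) * x.2)
          + ((c.1 : ℚ_[p]) * t.1 + (c.2 : ℚ_[p]) * t.2) := by
      show (c.1 : ℚ_[p]) * (x.1 + t.1) + (c.2 : ℚ_[p]) * (x.2 + t.2) = _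
      ring
    rw [he, hψadd, mul_comm]
  have hmax : Measurable fun x : ℚ_[p] × ℚ_[p] => max ‖x.1‖ ‖x.2‖ :=
    (measurable_fst.norm).max (measurable_snd.norm)
  have hlinm : ∀ A B : ℤ,
      Measurable fun x : ℚ_[p] × ℚ_[p] => ‖(A : ℚ_[p]) * x.1 + (B : ℚ_[p]) * x.2‖ :=
    fun A B => ((measurable_const.mul measurable_fst).add
      (measurable_const.mul measurable_snd)).norm
  have hUabm : ∀ (A B : ℤ) (α β : ℕ), MeasurableSet (Uab p A B α β) := by
    intro A B α β
    unfold Uab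
    rw [Set.setOf_and]
    exact (measurableSet_eq_fun hmax measurable_const).inter
      (measurableSet_eq_fun (hlinm A B) measurable_const)
  have hUam : ∀ (A B : ℤ) (α : ℕ), MeasurableSet (Ua p A B α) := by
    intro A B α
    unfold Ua
    rw [Set.setOf_and]
    exact (measurableSet_eq_fun hmax measurable_const).inter
      (measurableSet_le (hlinm A B) measurable_const)
  have hUtotm : ∀ α : ℕ, MeasurableSet (Utot p a b α) := by
    intro α
    unfold Utot
    rw [Set.setOf_and]
    refine (measurableSet_eq_fun hmax measurable_const).inter ?_
    rw [Set.setOf_forall]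
    exact MeasurableSet.iInter fun j =>
      measurableSet_eq_fun (hlinm (a j) (b j)) measurable_const
  -- integrability
  have hball : ∀ (R : ℝ) (x : ℚ_[p] × ℚ_[p]),
      x ∈ Metric.closedBall (0 : ℚ_[p] × ℚ_[p]) R ↔ max ‖x.1‖ ‖x.2‖ ≤ R := by
    intro R x
    rw [Metric.mem_closedBall, Prod.dist_eq]
    simp
  have hIntOn : ∀ (s : Set (ℚ_[p] × ℚ_[p])) (R : ℝ),
      (∀ x ∈ s, max ‖x.1‖ ‖x.2‖ ≤ R) → IntegrableOn f s μ := by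
    intro s R hsub
    have hcpt : IsCompact (Metric.closedBall (0 : ℚ_[p] × ℚ_[p]) R) :=
      isCompact_closedBall _ _
    exact (hfc.continuousOn.integrableOn_compact hcpt).mono_set
      fun x hx => (hball R x).mpr (hsub x hx)
  -- the unit polydisc
  set Z : Set (ℚ_[p] × ℚ_[p]) := {x | ‖x.1‖ ≤ 1 ∧ ‖x.2‖ ≤ 1} with hZdef
  have hZm : MeasurableSet Z := by
    rw [hZdef, Set.setOf_and]
    exact (measurableSet_le measurable_fst.norm measurable_const).inter
      (measurableSet_le measurable_snd.norm measurable_const)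
  have hIntZ : IntegrableOn f Z μ :=
    hIntOn Z 1 fun x hx => max_le hx.1 hx.2
  have hZint : ∫ x in Z, f x ∂μ = 1 := by
    rw [setIntegral_congr_fun hZm
      (fun x hx => hψtriv _ (aux_lin_le c.1 c.2 x.1 x.2 hx.1 hx.2) :
        Set.EqOn f (fun _ => (1:ℂ)) Z)]
    rw [setIntegral_const, measureReal_def, hμ1]
    simp
  -- special translation elements
  have hpinv : ‖((p : ℕ) : ℚ_[p])⁻¹‖ = p := by
    rw [norm_inv, Padic.norm_p, inv_inv]
  have hψpinv : ∀ u : ℚ_[p], ‖u‖ = p → ψ u ≠ 1 :=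
    fun u hu => aux_psi_ne_one ψ hψadd hψtriv hψnontriv u hu
  have htk : ∀ k : Fin r, ∃ t : ℚ_[p] × ℚ_[p], ‖t.1‖ ≤ p ∧ ‖t.2‖ ≤ p ∧
      (a k : ℚ_[p]) * t.1 + (b k : ℚ_[p]) * t.2 = 0 ∧
      ψ ((c.1 : ℚ_[p]) * t.1 + (c.2 : ℚ_[p]) * t.2) ≠ 1 := by
    intro k
    refine ⟨(-(b k : ℚ_[p]) * ((p : ℕ) : ℚ_[p])⁻¹, (a k : ℚ_[p]) * ((p : ℕ) : ℚ_[p])⁻¹),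
      ?_, ?_, by ring, ?_⟩
    · show ‖-(b k : ℚ_[p]) * ((p : ℕ) : ℚ_[p])⁻¹‖ ≤ (p : ℝ)
      rw [norm_mul, norm_neg, hpinv]
      calc ‖((b k : ℤ) : ℚ_[p])‖ * (p : ℝ) ≤ 1 * p :=
            mul_le_mul_of_nonneg_right (Padic.norm_int_le_one _) hp0.le
        _ = p := one_mul _
    · show ‖(a k : ℚ_[p]) * ((p : ℕ) : ℚ_[p])⁻¹‖ ≤ (p : ℝ)
      rw [norm_mul, hpinv]
      calc ‖((a k : ℤ) : ℚ_[p])‖ * (p : ℝ) ≤ 1 * p :=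
            mul_le_mul_of_nonneg_right (Padic.norm_int_le_one _) hp0.le
        _ = p := one_mul _
    · show ψ ((c.1 : ℚ_[p]) * (-(b k : ℚ_[p]) * ((p : ℕ) : ℚ_[p])⁻¹)
        + (c.2 : ℚ_[p]) * ((a k : ℚ_[p]) * ((p : ℕ) : ℚ_[p])⁻¹)) ≠ 1
      have he : (c.1 : ℚ_[p]) * (-(b k : ℚ_[p]) * ((p : ℕ) : ℚ_[p])⁻¹)
          + (c.2 : ℚ_[p]) * ((a k : ℚ_[p]) * ((p : ℕ) : ℚ_[p])⁻¹)
          = ((a k * c.2 - b k * c.1 : ℤ) : ℚ_[p]) * ((p : ℕ) : ℚ_[p])⁻¹ := by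
        push_cast; ring
      rw [he]
      apply hψpinv
      rw [norm_mul, aux_norm_int_unit (hgen k), hpinv, one_mul]
  have htc : ∃ t : ℚ_[p] × ℚ_[p], ‖t.1‖ ≤ p ∧ ‖t.2‖ ≤ p ∧
      ψ ((c.1 : ℚ_[p]) * t.1 + (c.2 : ℚ_[p]) * t.2) ≠ 1 := by
    by_cases h1 : (p : ℤ) ∣ c.1
    · have hc2 : ¬ (p : ℤ) ∣ c.2 := by
        intro h2
        exact hgen ⟨0, hr⟩ (dvd_sub (h2.mul_left _) (h1.mul_left _))
      have hc2u : ‖((c.2 : ℤ) : ℚ_[p])‖ = 1 := aux_norm_int_unit hc2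
      have hc2ne : ((c.2 : ℤ) : ℚ_[p]) ≠ 0 := by
        intro h; rw [h, norm_zero] at hc2u; exact one_ne_zero hc2u.symm
      refine ⟨((0 : ℚ_[p]), ((c.2 : ℤ) : ℚ_[p])⁻¹ * ((p : ℕ) : ℚ_[p])⁻¹), ?_, ?_, ?_⟩
      · show ‖(0 : ℚ_[p])‖ ≤ (p : ℝ); simp [hp0.le]
      · show ‖((c.2 : ℤ) : ℚ_[p])⁻¹ * ((p : ℕ) : ℚ_[p])⁻¹‖ ≤ (p : ℝ)
        rw [norm_mul, norm_inv, hc2u, inv_one, one_mul, hpinv]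
      · show ψ ((c.1 : ℚ_[p]) * 0
          + (c.2 : ℚ_[p]) * (((c.2 : ℤ) : ℚ_[p])⁻¹ * ((p : ℕ) : ℚ_[p])⁻¹)) ≠ 1
        have he : (c.1 : ℚ_[p]) * 0
            + (c.2 : ℚ_[p]) * (((c.2 : ℤ) : ℚ_[p])⁻¹ * ((p : ℕ) : ℚ_[p])⁻¹)
            = ((p : ℕ) : ℚ_[p])⁻¹ := by
          rw [mul_zero, zero_add, ← mul_assoc, mul_inv_cancel₀ hc2ne, one_mul]
        rw [he]; exact hψpinv _ hpinv
    · have hc1u : ‖((c.1 : ℤ) : ℚ_[p])‖ = 1 := aux_norm_int_unit h1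
      have hc1ne : ((c.1 : ℤ) : ℚ_[p]) ≠ 0 := by
        intro h; rw [h, norm_zero] at hc1u; exact one_ne_zero hc1u.symm
      refine ⟨(((c.1 : ℤ) : ℚ_[p])⁻¹ * ((p : ℕ) : ℚ_[p])⁻¹, (0 : ℚ_[p])), ?_, ?_, ?_⟩
      · show ‖((c.1 : ℤ) : ℚ_[p])⁻¹ * ((p : ℕ) : ℚ_[p])⁻¹‖ ≤ (p : ℝ)
        rw [norm_mul, norm_inv, hc1u, inv_one, one_mul, hpinv]
      · show ‖(0 : ℚ_[p])‖ ≤ (p : ℝ); simp [hp0.le]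
      · show ψ ((c.1 : ℚ_[p]) * (((c.1 : ℤ) : ℚ_[p])⁻¹ * ((p : ℕ) : ℚ_[p])⁻¹)
          + (c.2 : ℚ_[p]) * 0) ≠ 1
        have he : (c.1 : ℚ_[p]) * (((c.1 : ℤ) : ℚ_[p])⁻¹ * ((p : ℕ) : ℚ_[p])⁻¹)
            + (c.2 : ℚ_[p]) * 0 = ((p : ℕ) : ℚ_[p])⁻¹ := by
          rw [mul_zero, add_zero, ← mul_assoc, mul_inv_cancel₀ hc1ne, one_mul]
        rw [he]; exact hψpinv _ hpinv
  -- Part (i)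
  have part1 : ∀ k, ∀ α β : ℕ, 1 ≤ β → β < α →
      ∫ x in Uab p (a k) (b k) α β, f x ∂μ = 0 := by
    intro k α β hβ hβα
    obtain ⟨t, ht1, ht2, htl, htψ⟩ := htk k
    have hplt : (p : ℝ) < (p : ℝ) ^ α := by
      calc (p : ℝ) = (p : ℝ) ^ 1 := (pow_one _).symm
        _ < (p : ℝ) ^ α := pow_lt_pow_right₀ hp1 (by omega)
    have hstep : ∀ s : ℚ_[p] × ℚ_[p], ‖s.1‖ ≤ p → ‖s.2‖ ≤ p →
        (a k : ℚ_[p]) * s.1 + (b k : ℚ_[p]) * s.2 = 0 →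
        ∀ x ∈ Uab p (a k) (b k) α β, x + s ∈ Uab p (a k) (b k) α β := by
      intro s hs1 hs2 hsl x hx
      refine ⟨aux_pair_shift x s (lt_of_le_of_lt hs1 hplt) (lt_of_le_of_lt hs2 hplt) hx.1, ?_⟩
      have he : (a k : ℚ_[p]) * (x + s).1 + (b k : ℚ_[p]) * (x + s).2
          = ((a k : ℚ_[p]) * x.1 + (b k : ℚ_[p]) * x.2)
            + ((a k : ℚ_[p]) * s.1 + (b k : ℚ_[p]) * s.2) := by
        show (a k : ℚ_[p]) * (x.1 + s.1) + (b k : ℚ_[p]) * (x.2 + s.2) = _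
        ring
      rw [he, hsl, add_zero]
      exact hx.2
    have hnegl : (a k : ℚ_[p]) * (-t).1 + (b k : ℚ_[p]) * (-t).2 = 0 := by
      show (a k : ℚ_[p]) * (-t.1) + (b k : ℚ_[p]) * (-t.2) = 0
      linear_combination -htl
    have hinv : ∀ x, x ∈ Uab p (a k) (b k) α β ↔ x + t ∈ Uab p (a k) (b k) α β := by
      intro x
      constructor
      · exact hstep t ht1 ht2 htl x
      · intro hx
        have h2 := hstep (-t) (by show ‖-t.1‖ ≤ (p : ℝ); rw [norm_neg]; exact ht1)
          (by show ‖-t.2‖ ≤ (p : ℝ); rw [norm_neg]; exact ht2) hnegl _ hx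
        rwa [add_neg_cancel_right] at h2
    exact aux_vanish μ f _ (hUabm _ _ _ _) t hinv _ htψ (hfshift t)
  -- Part (ii), α ≥ 2
  have part2b : ∀ k, ∀ α : ℕ, 2 ≤ α → ∫ x in Ua p (a k) (b k) α, f x ∂μ = 0 := by
    intro k α hα
    obtain ⟨t, ht1, ht2, htl, htψ⟩ := htk k
    have hplt : (p : ℝ) < (p : ℝ) ^ α := by
      calc (p : ℝ) = (p : ℝ) ^ 1 := (pow_one _).symm
        _ < (p : ℝ) ^ α := pow_lt_pow_right₀ hp1 (by omega)
    have hstep : ∀ s : ℚ_[p] × ℚ_[p], ‖s.1‖ ≤ p → ‖s.2‖ ≤ p →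
        (a k : ℚ_[p]) * s.1 + (b k : ℚ_[p]) * s.2 = 0 →
        ∀ x ∈ Ua p (a k) (b k) α, x + s ∈ Ua p (a k) (b k) α := by
      intro s hs1 hs2 hsl x hx
      refine ⟨aux_pair_shift x s (lt_of_le_of_lt hs1 hplt) (lt_of_le_of_lt hs2 hplt) hx.1, ?_⟩
      have he : (a k : ℚ_[p]) * (x + s).1 + (b k : ℚ_[p]) * (x + s).2
          = ((a k : ℚ_[p]) * x.1 + (b k : ℚ_[p]) * x.2)
            + ((a k : ℚ_[p]) * s.1 + (b k : ℚ_[p]) * s.2) := by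
        show (a k : ℚ_[p]) * (x.1 + s.1) + (b k : ℚ_[p]) * (x.2 + s.2) = _
        ring
      rw [he, hsl, add_zero]
      exact hx.2
    have hnegl : (a k : ℚ_[p]) * (-t).1 + (b k : ℚ_[p]) * (-t).2 = 0 := by
      show (a k : ℚ_[p]) * (-t.1) + (b k : ℚ_[p]) * (-t.2) = 0
      linear_combination -htl
    have hinv : ∀ x, x ∈ Ua p (a k) (b k) α ↔ x + t ∈ Ua p (a k) (b k) α := by
      intro x
      constructor
      · exact hstep t ht1 ht2 htl x
      · intro hx
        have h2 := hstep (-t) (by show ‖-t.1‖ ≤ (p : ℝ); rw [norm_neg]; exact ht1)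
          (by show ‖-t.2‖ ≤ (p : ℝ); rw [norm_neg]; exact ht2) hnegl _ hx
        rwa [add_neg_cancel_right] at h2
    exact aux_vanish μ f _ (hUam _ _ _) t hinv _ htψ (hfshift t)
  -- Part (ii), α = 1
  have part2a : ∀ k, ∫ x in Ua p (a k) (b k) 1, f x ∂μ = -1 := by
    intro k
    obtain ⟨t, ht1, ht2, htl, htψ⟩ := htk k
    set B : Set (ℚ_[p] × ℚ_[p]) :=
      {x | max ‖x.1‖ ‖x.2‖ ≤ (p : ℝ) ∧
        ‖(a k : ℚ_[p]) * x.1 + (b k : ℚ_[p]) * x.2‖ ≤ 1} with hBdef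
    have hBm : MeasurableSet B := by
      rw [hBdef, Set.setOf_and]
      exact (measurableSet_le hmax measurable_const).inter
        (measurableSet_le (hlinm _ _) measurable_const)
    have hstep : ∀ s : ℚ_[p] × ℚ_[p], ‖s.1‖ ≤ p → ‖s.2‖ ≤ p →
        (a k : ℚ_[p]) * s.1 + (b k : ℚ_[p]) * s.2 = 0 →
        ∀ x ∈ B, x + s ∈ B := by
      intro s hs1 hs2 hsl x hx
      constructor
      · show max ‖x.1 + s.1‖ ‖x.2 + s.2‖ ≤ (p : ℝ)
        refine max_le ?_ ?_
        · exact le_trans (Padic.nonarchimedean x.1 s.1)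
            (max_le (le_trans (le_max_left _ _) hx.1) hs1)
        · exact le_trans (Padic.nonarchimedean x.2 s.2)
            (max_le (le_trans (le_max_right _ _) hx.1) hs2)
      · have he : (a k : ℚ_[p]) * (x + s).1 + (b k : ℚ_[p]) * (x + s).2
            = ((a k : ℚ_[p]) * x.1 + (b k : ℚ_[p]) * x.2)
              + ((a k : ℚ_[p]) * s.1 + (b k : ℚ_[p]) * s.2) := by
          show (a k : ℚ_[p]) * (x.1 + s.1) + (b k : ℚ_[p]) * (x.2 + s.2) = _
          ring
        rw [he, hsl, add_zero]
        exact hx.2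
    have hnegl : (a k : ℚ_[p]) * (-t).1 + (b k : ℚ_[p]) * (-t).2 = 0 := by
      show (a k : ℚ_[p]) * (-t.1) + (b k : ℚ_[p]) * (-t.2) = 0
      linear_combination -htl
    have hinv : ∀ x, x ∈ B ↔ x + t ∈ B := by
      intro x
      constructor
      · exact hstep t ht1 ht2 htl x
      · intro hx
        have h2 := hstep (-t) (by show ‖-t.1‖ ≤ (p : ℝ); rw [norm_neg]; exact ht1)
          (by show ‖-t.2‖ ≤ (p : ℝ); rw [norm_neg]; exact ht2) hnegl _ hx
        rwa [add_neg_cancel_right] at h2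
    have hBzero : ∫ x in B, f x ∂μ = 0 := aux_vanish μ f _ hBm t hinv _ htψ (hfshift t)
    have hUaZ : B = Ua p (a k) (b k) 1 ∪ Z := by
      ext x
      constructor
      · intro hx
        by_cases hz : max ‖x.1‖ ‖x.2‖ ≤ 1
        · exact Or.inr ⟨le_trans (le_max_left _ _) hz, le_trans (le_max_right _ _) hz⟩
        · refine Or.inl ⟨?_, hx.2⟩
          rw [pow_one]
          exact aux_max_eq_p x hx.1 hz
      · rintro (hx | hx)
        · refine ⟨?_, hx.2⟩
          rw [show max ‖x.1‖ ‖x.2‖ = ((p : ℝ)) ^ 1 from hx.1, pow_one]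
        · exact ⟨le_trans (max_le hx.1 hx.2) hp1.le,
            aux_lin_le (a k) (b k) x.1 x.2 hx.1 hx.2⟩
    have hdisj : Disjoint (Ua p (a k) (b k) 1) Z := by
      rw [Set.disjoint_left]
      rintro x hx hz
      have h2 : (p : ℝ) ≤ 1 := by
        rw [← pow_one (p : ℝ), ← hx.1]
        exact max_le hz.1 hz.2
      exact absurd h2 (not_le.mpr hp1)
    have hIntUa : IntegrableOn f (Ua p (a k) (b k) 1) μ :=
      hIntOn _ p fun x hx => le_of_eq (by rw [hx.1, pow_one])
    have hsum : ∫ x in B, f x ∂μ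
        = ∫ x in Ua p (a k) (b k) 1, f x ∂μ + ∫ x in Z, f x ∂μ := by
      rw [hUaZ]
      exact setIntegral_union hdisj hZm hIntUa hIntZ
    rw [hBzero, hZint] at hsum
    linear_combination -hsum
  -- Part (iii), α ≥ 2
  have part3b : ∀ α : ℕ, 2 ≤ α → ∫ x in Utot p a b α, f x ∂μ = 0 := by
    intro α hα
    obtain ⟨t, ht1, ht2, htψ⟩ := htc
    have hplt : (p : ℝ) < (p : ℝ) ^ α := by
      calc (p : ℝ) = (p : ℝ) ^ 1 := (pow_one _).symm
        _ < (p : ℝ) ^ α := pow_lt_pow_right₀ hp1 (by omega)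
    have hstep : ∀ s : ℚ_[p] × ℚ_[p], ‖s.1‖ ≤ p → ‖s.2‖ ≤ p →
        ∀ x ∈ Utot p a b α, x + s ∈ Utot p a b α := by
      intro s hs1 hs2 x hx
      refine ⟨aux_pair_shift x s (lt_of_le_of_lt hs1 hplt) (lt_of_le_of_lt hs2 hplt) hx.1,
        fun j => ?_⟩
      have he : (a j : ℚ_[p]) * (x + s).1 + (b j : ℚ_[p]) * (x + s).2
          = ((a j : ℚ_[p]) * x.1 + (b j : ℚ_[p]) * x.2)
            + ((a j : ℚ_[p]) * s.1 + (b j : ℚ_[p]) * s.2) := by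
        show (a j : ℚ_[p]) * (x.1 + s.1) + (b j : ℚ_[p]) * (x.2 + s.2) = _
        ring
      have hlt : ‖(a j : ℚ_[p]) * s.1 + (b j : ℚ_[p]) * s.2‖
          < ‖(a j : ℚ_[p]) * x.1 + (b j : ℚ_[p]) * x.2‖ := by
        rw [hx.2 j]
        exact lt_of_le_of_lt (aux_lin_le (a j) (b j) s.1 s.2 hs1 hs2) hplt
      rw [he, aux_add_norm _ _ hlt]
      exact hx.2 j
    have hinv : ∀ x, x ∈ Utot p a b α ↔ x + t ∈ Utot p a b α := by
      intro x
      constructor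
      · exact hstep t ht1 ht2 x
      · intro hx
        have h2 := hstep (-t) (by show ‖-t.1‖ ≤ (p : ℝ); rw [norm_neg]; exact ht1)
          (by show ‖-t.2‖ ≤ (p : ℝ); rw [norm_neg]; exact ht2) _ hx
        rwa [add_neg_cancel_right] at h2
    exact aux_vanish μ f _ (hUtotm _) t hinv _ htψ (hfshift t)
  -- Part (iii), α = 1
  have part3a : ∫ x in Utot p a b 1, f x ∂μ = (r : ℂ) - 1 := by
    obtain ⟨t, ht1, ht2, htψ⟩ := htc
    set Bp : Set (ℚ_[p] × ℚ_[p]) := {x | max ‖x.1‖ ‖x.2‖ ≤ (p : ℝ)} with hBpdef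
    have hBpm : MeasurableSet Bp := by
      rw [hBpdef]; exact measurableSet_le hmax measurable_const
    have hstep : ∀ s : ℚ_[p] × ℚ_[p], ‖s.1‖ ≤ p → ‖s.2‖ ≤ p →
        ∀ x ∈ Bp, x + s ∈ Bp := by
      intro s hs1 hs2 x hx
      show max ‖x.1 + s.1‖ ‖x.2 + s.2‖ ≤ (p : ℝ)
      refine max_le ?_ ?_
      · exact le_trans (Padic.nonarchimedean x.1 s.1)
          (max_le (le_trans (le_max_left _ _) hx) hs1)
      · exact le_trans (Padic.nonarchimedean x.2 s.2)
          (max_le (le_trans (le_max_right _ _) hx) hs2)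
    have hinv : ∀ x, x ∈ Bp ↔ x + t ∈ Bp := by
      intro x
      constructor
      · exact hstep t ht1 ht2 x
      · intro hx
        have h2 := hstep (-t) (by show ‖-t.1‖ ≤ (p : ℝ); rw [norm_neg]; exact ht1)
          (by show ‖-t.2‖ ≤ (p : ℝ); rw [norm_neg]; exact ht2) _ hx
        rwa [add_neg_cancel_right] at h2
    have hBpzero : ∫ x in Bp, f x ∂μ = 0 := aux_vanish μ f _ hBpm t hinv _ htψ (hfshift t)
    have hUa_sub : ∀ (k : Fin r) x, x ∈ Ua p (a k) (b k) 1 → max ‖x.1‖ ‖x.2‖ ≤ (p : ℝ) :=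
      fun k x hx => le_of_eq (by rw [hx.1, pow_one])
    have hIntUaU : IntegrableOn f (⋃ k, Ua p (a k) (b k) 1) μ := by
      apply hIntOn _ (p : ℝ)
      intro x hx
      obtain ⟨k, hk⟩ := Set.mem_iUnion.mp hx
      exact hUa_sub k x hk
    have hUamU : MeasurableSet (⋃ k, Ua p (a k) (b k) 1) :=
      MeasurableSet.iUnion fun k => hUam _ _ _
    have hpair : Pairwise (Function.onFun Disjoint fun k => Ua p (a k) (b k) 1) := by
      intro j k hjk
      rw [Function.onFun, Set.disjoint_left]
      rintro x hxj hxk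
      have hdnorm : ‖((a j * b k - a k * b j : ℤ) : ℚ_[p])‖ = 1 :=
        aux_norm_int_unit (hpS j k hjk)
      have e1 : ((a j * b k - a k * b j : ℤ) : ℚ_[p]) * x.1
          = ((b k : ℤ) : ℚ_[p]) * ((a j : ℚ_[p]) * x.1 + (b j : ℚ_[p]) * x.2)
            + ((-(b j) : ℤ) : ℚ_[p]) * ((a k : ℚ_[p]) * x.1 + (b k : ℚ_[p]) * x.2) := by
        push_cast; ring
      have e2 : ((a j * b k - a k * b j : ℤ) : ℚ_[p]) * x.2
          = ((-(a k) : ℤ) : ℚ_[p]) * ((a j : ℚ_[p]) * x.1 + (b j : ℚ_[p]) * x.2)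
            + ((a j : ℤ) : ℚ_[p]) * ((a k : ℚ_[p]) * x.1 + (b k : ℚ_[p]) * x.2) := by
        push_cast; ring
      have h1 : ‖x.1‖ ≤ 1 := by
        have hh : ‖x.1‖ = ‖((a j * b k - a k * b j : ℤ) : ℚ_[p]) * x.1‖ := by
          rw [norm_mul, hdnorm, one_mul]
        rw [hh, e1]
        exact aux_lin_le (b k) (-(b j)) _ _ hxj.2 hxk.2
      have h2 : ‖x.2‖ ≤ 1 := by
        have hh : ‖x.2‖ = ‖((a j * b k - a k * b j : ℤ) : ℚ_[p]) * x.2‖ := by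
          rw [norm_mul, hdnorm, one_mul]
        rw [hh, e2]
        exact aux_lin_le (-(a k)) (a j) _ _ hxj.2 hxk.2
      have hle : (p : ℝ) ≤ 1 := by
        rw [← pow_one (p : ℝ), ← hxj.1]
        exact max_le h1 h2
      exact absurd hle (not_le.mpr hp1)
    have hsplit : Bp = (Z ∪ ⋃ k, Ua p (a k) (b k) 1) ∪ Utot p a b 1 := by
      ext x
      constructor
      · intro hx
        have hx' : max ‖x.1‖ ‖x.2‖ ≤ (p : ℝ) := hx
        by_cases hz : max ‖x.1‖ ‖x.2‖ ≤ 1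
        · exact Or.inl (Or.inl ⟨le_trans (le_max_left _ _) hz,
            le_trans (le_max_right _ _) hz⟩)
        · have hxp : max ‖x.1‖ ‖x.2‖ = p := aux_max_eq_p x hx' hz
          by_cases hex : ∃ j, ‖(a j : ℚ_[p]) * x.1 + (b j : ℚ_[p]) * x.2‖ ≤ 1
          · obtain ⟨j, hj⟩ := hex
            exact Or.inl (Or.inr (Set.mem_iUnion.mpr
              ⟨j, ⟨by rw [pow_one]; exact hxp, hj⟩⟩))
          · push_neg at hex
            refine Or.inr ⟨by rw [pow_one]; exact hxp, fun j => ?_⟩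
            rw [pow_one]
            refine aux_eq_p ?_ (not_le.mpr (hex j))
            exact aux_lin_le (a j) (b j) x.1 x.2
              (le_trans (le_max_left _ _) hx') (le_trans (le_max_right _ _) hx')
      · rintro ((hx | hx) | hx)
        · show max ‖x.1‖ ‖x.2‖ ≤ (p : ℝ)
          exact le_trans (max_le hx.1 hx.2) hp1.le
        · obtain ⟨j, hj⟩ := Set.mem_iUnion.mp hx
          exact hUa_sub j x hj
        · show max ‖x.1‖ ‖x.2‖ ≤ (p : ℝ)
          exact le_of_eq (by rw [hx.1, pow_one])
    have hd2 : Disjoint Z (⋃ k, Ua p (a k) (b k) 1) := by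
      rw [Set.disjoint_left]
      rintro x hz hx
      obtain ⟨j, hj⟩ := Set.mem_iUnion.mp hx
      have hle : (p : ℝ) ≤ 1 := by
        rw [← pow_one (p : ℝ), ← hj.1]
        exact max_le hz.1 hz.2
      exact absurd hle (not_le.mpr hp1)
    have hd1 : Disjoint (Z ∪ ⋃ k, Ua p (a k) (b k) 1) (Utot p a b 1) := by
      rw [Set.disjoint_left]
      rintro x (hz | hx) ht'
      · have hle : (p : ℝ) ≤ 1 := by
          rw [← pow_one (p : ℝ), ← ht'.1]
          exact max_le hz.1 hz.2
        exact absurd hle (not_le.mpr hp1)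
      · obtain ⟨j, hj⟩ := Set.mem_iUnion.mp hx
        have h2 := ht'.2 j
        rw [pow_one] at h2
        have h3 := hj.2
        rw [h2] at h3
        exact absurd h3 (not_le.mpr hp1)
    have hIntUtot : IntegrableOn f (Utot p a b 1) μ :=
      hIntOn _ p fun x hx => le_of_eq (by rw [hx.1, pow_one])
    have hIntLeft : IntegrableOn f (Z ∪ ⋃ k, Ua p (a k) (b k) 1) μ :=
      hIntZ.union hIntUaU
    have hstep1 : ∫ x in Bp, f x ∂μ
        = ∫ x in Z ∪ ⋃ k, Ua p (a k) (b k) 1, f x ∂μ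
          + ∫ x in Utot p a b 1, f x ∂μ := by
      conv_lhs => rw [hsplit]
      exact setIntegral_union hd1 (hUtotm 1) hIntLeft hIntUtot
    have hstep2 : ∫ x in Z ∪ ⋃ k, Ua p (a k) (b k) 1, f x ∂μ
        = 1 + ∑' k : Fin r, ∫ x in Ua p (a k) (b k) 1, f x ∂μ := by
      rw [setIntegral_union hd2 hUamU hIntZ hIntUaU, hZint,
        integral_iUnion (fun k => hUam _ _ _) hpair hIntUaU]
    have hsumv : ∑' k : Fin r, ∫ x in Ua p (a k) (b k) 1, f x ∂μ = -(r : ℂ) := by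
      rw [tsum_fintype]
      rw [Finset.sum_congr rfl fun k _ => part2a k]
      simp [Finset.sum_const, Finset.card_univ]
    rw [hstep2, hsumv, hBpzero] at hstep1
    linear_combination -hstep1
  exact ⟨part1, fun k => ⟨part2a k, part2b k⟩, part3a, part3b⟩

end MainStmt10
end

section
/- With the linear forms ℓ_1,…,ℓ_r, the set S, and the sets U_k(α,β), U_k(α) as in the context, let p ∉ S be a prime, ψ a standard additive character of ℚ_p, fix 1 ≤ k ≤ r, and let a = (a_1,a_2) ∈ ℤ² \ {0} be proportional to (a_k,b_k) (i.e. a_1 b_k = a_2 a_k) with p not dividing gcd(a_1,a_2). Then: (i) for integers α > β ≥ 1, ∫_{U_k(α,β)} ψ_a dμ = −p^{α−1}(p−1) if β = α−1 and = 0 otherwise; (ii) for every integer α ≥ 1, ∫_{U_k(α)} ψ_a dμ = p^{α−1}(p−1). -/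
open MeasureTheory
open scoped ENNReal

namespace Stmt11

variable (p : ℕ) [Fact p.Prime]

/-- closed ball of radius `p^n`. -/
def CB (n : ℕ) : Set ℚ_[p] := {x | ‖x‖ ≤ (p : ℝ) ^ n}

/-- sphere of radius `p^n`. -/
def Sph (n : ℕ) : Set ℚ_[p] := {x | ‖x‖ = (p : ℝ) ^ n}

variable {p}

lemma hp1 : (1 : ℝ) < p := by exact_mod_cast (Fact.out : p.Prime).one_lt

lemma hp0 : (0 : ℝ) < p := lt_trans one_pos hp1

lemma measurableSet_CB (n : ℕ) : MeasurableSet (CB p n) :=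
  (isClosed_le continuous_norm continuous_const).measurableSet

lemma measurableSet_Sph (n : ℕ) : MeasurableSet (Sph p n) :=
  (isClosed_eq continuous_norm continuous_const).measurableSet

lemma CB_subset_closedBall (n : ℕ) : CB p n ⊆ Metric.closedBall 0 ((p:ℝ)^n) := by
  intro x hx; simpa [CB, Metric.mem_closedBall, dist_eq_norm] using hx

lemma isCompact_CB (n : ℕ) : IsCompact (CB p n) := by
  have : CB p n = Metric.closedBall 0 ((p:ℝ)^n) := by
    ext x; simp [CB, Metric.mem_closedBall, dist_eq_norm]
  rw [this]; exact isCompact_closedBall _ _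

lemma Sph_subset_CB (n : ℕ) : Sph p n ⊆ CB p n := fun x hx => le_of_eq hx

lemma isCompact_Sph (n : ℕ) : IsCompact (Sph p n) :=
  (isCompact_CB n).of_isClosed_subset (isClosed_eq continuous_norm continuous_const)
    (Sph_subset_CB n)

lemma CB_mono {m n : ℕ} (h : m ≤ n) : CB p m ⊆ CB p n := fun x hx =>
  le_trans hx (pow_le_pow_right₀ (le_of_lt hp1) h)

/-- `‖x‖ ≤ p^(n-1) ↔ ‖x‖ < p^n` for `1 ≤ n`. -/
lemma norm_le_pred_iff_lt {x : ℚ_[p]} {n : ℕ} (hn : 1 ≤ n) :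
    ‖x‖ ≤ (p : ℝ) ^ (n - 1) ↔ ‖x‖ < (p : ℝ) ^ n := by
  have h := Padic.norm_le_pow_iff_norm_lt_pow_add_one x ((n : ℤ) - 1)
  rw [sub_add_cancel] at h
  have e1 : ((p : ℝ) ^ ((n : ℤ) - 1)) = (p : ℝ) ^ (n - 1) := by
    rw [← zpow_natCast]
    congr 1
    omega
  have e2 : ((p : ℝ) ^ (n : ℤ)) = (p : ℝ) ^ n := by rw [← zpow_natCast]
  rw [e1, e2] at h
  exact h

lemma Sph_eq_diff {n : ℕ} (hn : 1 ≤ n) : Sph p n = CB p n \ CB p (n - 1) := by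
  ext x
  simp only [Sph, CB, Set.mem_setOf_eq, Set.mem_diff]
  constructor
  · intro h
    refine ⟨le_of_eq h, fun h2 => ?_⟩
    have := (norm_le_pred_iff_lt hn).1 h2
    rw [h] at this; exact lt_irrefl _ this
  · rintro ⟨h1, h2⟩
    have h3 : ¬ ‖x‖ < (p:ℝ) ^ n := fun hlt => h2 ((norm_le_pred_iff_lt hn).2 hlt)
    exact le_antisymm h1 (not_lt.1 h3)

/-- the center of the `j`-th residue disc inside `CB (m+1)`. -/
noncomputable def ctr (p : ℕ) [Fact p.Prime] (m j : ℕ) : ℚ_[p] :=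
  (j : ℚ_[p]) * (p : ℚ_[p]) ^ (-(m + 1 : ℤ))

lemma CB_mem_decomp {m : ℕ} {x : ℚ_[p]} (hx : x ∈ CB p (m + 1)) :
    ∃ j : ℕ, j < p ∧ ‖x - ctr p m j‖ ≤ (p : ℝ) ^ m := by
  have hpne : ((p : ℚ_[p])) ≠ 0 := by
    exact_mod_cast Nat.cast_ne_zero.mpr (Fact.out : p.Prime).ne_zero
  set z : ℚ_[p] := x * (p : ℚ_[p]) ^ (m + 1) with hz
  have hznorm : ‖z‖ ≤ 1 := by
    rw [hz, norm_mul, Padic.norm_p_pow]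
    calc ‖x‖ * (p : ℝ) ^ (-(m + 1 : ℕ) : ℤ) ≤ (p : ℝ) ^ (m + 1) * (p : ℝ) ^ (-(m + 1 : ℕ) : ℤ) := by
          apply mul_le_mul_of_nonneg_right hx (le_of_lt (zpow_pos hp0 _))
      _ = 1 := by
          rw [← zpow_natCast (p : ℝ) (m + 1), ← zpow_add₀ (ne_of_gt hp0),
            show (((m+1 : ℕ) : ℤ) + -((m+1 : ℕ) : ℤ)) = 0 by ring, zpow_zero]
  set z' : ℤ_[p] := ⟨z, hznorm⟩ with hz'
  refine ⟨z'.zmodRepr, PadicInt.zmodRepr_lt_p z', ?_⟩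
  have hmem := PadicInt.sub_zmodRepr_mem z'
  have hlt : ‖z' - (z'.zmodRepr : ℤ_[p])‖ < 1 := by
    rwa [IsLocalRing.mem_maximalIdeal, PadicInt.mem_nonunits] at hmem
  have hlt' : ‖z - (z'.zmodRepr : ℚ_[p])‖ < 1 := by
    have : ((z' - (z'.zmodRepr : ℤ_[p]) : ℤ_[p]) : ℚ_[p]) = z - (z'.zmodRepr : ℚ_[p]) := by
      rw [PadicInt.coe_sub, PadicInt.coe_natCast]
    rwa [PadicInt.norm_def, this] at hlt
  have hle : ‖z - (z'.zmodRepr : ℚ_[p])‖ ≤ (p : ℝ) ^ (-1 : ℤ) := by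
    rw [Padic.norm_le_pow_iff_norm_lt_pow_add_one]
    simpa using hlt'
  have hxz : x - ctr p m z'.zmodRepr = (z - (z'.zmodRepr : ℚ_[p])) * (p : ℚ_[p]) ^ (-(m + 1 : ℤ)) := by
    rw [hz, ctr, sub_mul, mul_assoc, ← zpow_natCast (p : ℚ_[p]) (m + 1),
      ← zpow_add₀ hpne, show (((m+1 : ℕ) : ℤ) + -(m + 1 : ℤ)) = 0 by push_cast; ring,
      zpow_zero, mul_one]
  rw [hxz, norm_mul, Padic.norm_p_zpow, neg_neg]
  calc ‖z - (z'.zmodRepr : ℚ_[p])‖ * (p : ℝ) ^ (m + 1 : ℤ)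
      ≤ (p : ℝ) ^ (-1 : ℤ) * (p : ℝ) ^ (m + 1 : ℤ) :=
        mul_le_mul_of_nonneg_right hle (le_of_lt (zpow_pos hp0 _))
    _ = (p : ℝ) ^ m := by
        rw [← zpow_add₀ (ne_of_gt hp0), ← zpow_natCast (p : ℝ) m]
        norm_num

lemma ctr_dist {m : ℕ} {i j : ℕ} (hi : i < p) (hj : j < p) (hij : i ≠ j) :
    ‖ctr p m i - ctr p m j‖ = (p : ℝ) ^ (m + 1 : ℤ) := by
  have h1 : ctr p m i - ctr p m j = ((i : ℤ) - (j : ℤ) : ℤ) * (p : ℚ_[p]) ^ (-(m + 1 : ℤ)) := by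
    rw [ctr, ctr, ← sub_mul]; push_cast; ring
  have hint : ‖(((i : ℤ) - (j : ℤ) : ℤ) : ℚ_[p])‖ = 1 := by
    refine le_antisymm (Padic.norm_int_le_one _) ?_
    by_contra hcon
    push_neg at hcon
    have := Padic.norm_intCast_lt_one_iff.1 hcon
    have habs : ((i : ℤ) - (j : ℤ)).natAbs < ((p : ℤ)).natAbs := by
      simp only [Int.natAbs_natCast]; omega
    have := Int.eq_zero_of_dvd_of_natAbs_lt_natAbs this habs
    omega
  rw [h1, norm_mul, hint, one_mul, Padic.norm_p_zpow, neg_neg]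

lemma CB_decomp (m : ℕ) :
    CB p (m + 1) = ⋃ j ∈ Finset.range p, (fun x => -(ctr p m j) + x) ⁻¹' CB p m := by
  ext x
  simp only [Set.mem_iUnion, Finset.mem_range, Set.mem_preimage, CB, Set.mem_setOf_eq,
    neg_add_eq_sub, exists_prop]
  constructor
  · intro hx
    obtain ⟨j, hj, hle⟩ := CB_mem_decomp hx
    exact ⟨j, hj, hle⟩
  · rintro ⟨j, hj, hle⟩
    have h1 : ‖ctr p m j‖ ≤ (p : ℝ) ^ (m + 1) := by
      rw [ctr, norm_mul, Padic.norm_p_zpow, neg_neg]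
      calc ‖(j : ℚ_[p])‖ * (p : ℝ) ^ (m + 1 : ℤ) ≤ 1 * (p : ℝ) ^ (m + 1 : ℤ) := by
            apply mul_le_mul_of_nonneg_right ?_ (le_of_lt (zpow_pos hp0 _))
            exact_mod_cast Padic.norm_int_le_one (j : ℤ)
        _ = (p : ℝ) ^ (m + 1) := by rw [one_mul, ← zpow_natCast (p : ℝ) (m+1)]; norm_cast
    have : x = (x - ctr p m j) + ctr p m j := by ring
    rw [this]
    refine le_trans (Padic.nonarchimedean _ _) (max_le ?_ h1)
    exact le_trans hle (pow_le_pow_right₀ (le_of_lt hp1) (Nat.le_succ m))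

section MeasureLemmas

variable (ν : Measure ℚ_[p]) [ν.IsAddHaarMeasure]

lemma measure_CB_succ (m : ℕ) : ν (CB p (m + 1)) = p * ν (CB p m) := by
  rw [CB_decomp m]
  rw [measure_biUnion_finset ?disj ?meas]
  case meas =>
    intro j _
    exact (measurableSet_CB m).preimage (measurable_const_add _)
  case disj =>
    intro i hi j hj hij
    simp only [Finset.mem_coe, Finset.mem_range] at hi hj
    apply Set.disjoint_left.2
    intro x hxi hxj
    simp only [Set.mem_preimage, CB, Set.mem_setOf_eq, neg_add_eq_sub] at hxi hxj
    have hd : ‖ctr p m i - ctr p m j‖ ≤ (p : ℝ) ^ m := by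
      have : ctr p m i - ctr p m j = (ctr p m i - x) + (x - ctr p m j) := by ring
      rw [this]
      refine le_trans (Padic.nonarchimedean _ _) (max_le ?_ hxj)
      rwa [norm_sub_rev]
    rw [ctr_dist hi hj hij] at hd
    have : (p : ℝ) ^ (m + 1 : ℤ) ≤ (p : ℝ) ^ (m : ℤ) := by
      rw [← zpow_natCast (p : ℝ) m] at hd
      exact hd
    have := (zpow_le_zpow_iff_right₀ hp1).1 this
    omega
  have hterm : ∀ j ∈ Finset.range p, ν ((fun x => -(ctr p m j) + x) ⁻¹' CB p m) = ν (CB p m) := by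
    intro j _
    exact measure_preimage_add ν _ _
  rw [Finset.sum_congr rfl hterm, Finset.sum_const, Finset.card_range, nsmul_eq_mul]

lemma measure_CB (hν : ν (CB p 0) = 1) (n : ℕ) : ν (CB p n) = (p : ℝ≥0∞) ^ n := by
  induction n with
  | zero => rw [pow_zero]; exact hν
  | succ m ih => rw [measure_CB_succ, ih]; ring

lemma measure_CB_ne_top (hν : ν (CB p 0) = 1) (n : ℕ) : ν (CB p n) ≠ ⊤ := by
  rw [measure_CB ν hν]
  exact ENNReal.pow_ne_top (ENNReal.natCast_ne_top p)

lemma measure_CB_toReal (hν : ν (CB p 0) = 1) (n : ℕ) : (ν (CB p n)).toReal = (p : ℝ) ^ n := by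
  rw [measure_CB ν hν]
  simp

lemma measure_Sph_toReal (hν : ν (CB p 0) = 1) {n : ℕ} (hn : 1 ≤ n) :
    (ν (Sph p n)).toReal = (p : ℝ) ^ n - (p : ℝ) ^ (n - 1) := by
  rw [Sph_eq_diff hn,
    measure_diff (CB_mono (Nat.sub_le n 1)) (measurableSet_CB (n-1)).nullMeasurableSet
      (measure_CB_ne_top ν hν (n-1)),
    ENNReal.toReal_sub_of_le ?hle (measure_CB_ne_top ν hν n),
    measure_CB_toReal ν hν, measure_CB_toReal ν hν]
  case hle => exact measure_mono (CB_mono (Nat.sub_le n 1))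

lemma measure_Sph_ne_top (hν : ν (CB p 0) = 1) (n : ℕ) : ν (Sph p n) ≠ ⊤ := by
  refine ne_top_of_le_ne_top (measure_CB_ne_top ν hν n) (measure_mono (Sph_subset_CB n))

end MeasureLemmas

section CharInt

variable (ν : Measure ℚ_[p]) [ν.IsAddHaarMeasure]
variable {ψ : ℚ_[p] → ℂ} {t : ℚ_[p]}

lemma integrableOn_char (hψcont : Continuous ψ) {s : Set ℚ_[p]} (hs : IsCompact s) :
    IntegrableOn (fun y => ψ (t * y)) s ν :=
  ((hψcont.comp (continuous_const.mul continuous_id)).continuousOn).integrableOn_compact hs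

lemma int_CB_zero_exp (hν : ν (CB p 0) = 1)
    (hψtriv : ∀ x : ℚ_[p], ‖x‖ ≤ 1 → ψ x = 1) (ht : ‖t‖ ≤ 1) :
    ∫ y in CB p 0, ψ (t * y) ∂ν = 1 := by
  have heq : Set.EqOn (fun y => ψ (t * y)) (fun _ => (1 : ℂ)) (CB p 0) := by
    intro y hy
    apply hψtriv
    rw [norm_mul]
    calc ‖t‖ * ‖y‖ ≤ 1 * 1 := by
          apply mul_le_mul ht ?_ (norm_nonneg _) zero_le_one
          simpa [CB] using hy
      _ = 1 := by norm_num
  rw [setIntegral_congr_fun (measurableSet_CB 0) heq, setIntegral_const, measureReal_def, hν]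
  simp

set_option maxHeartbeats 1000000 in
lemma int_CB_eq_zero (hν : ν (CB p 0) = 1)
    (hψcont : Continuous ψ) (hψadd : ∀ x y : ℚ_[p], ψ (x + y) = ψ x * ψ y)
    {x₀ : ℚ_[p]} (hx₀ : ‖x₀‖ ≤ (p : ℝ)) (hx₀ne : ψ x₀ ≠ 1)
    (ht : ‖t‖ = 1) {m : ℕ} (hm : 1 ≤ m) :
    ∫ y in CB p m, ψ (t * y) ∂ν = 0 := by
  have htne : t ≠ 0 := by
    intro h; rw [h, norm_zero] at ht; exact zero_ne_one ht
  set a : ℚ_[p] := t⁻¹ * x₀ with ha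
  have hanorm : ‖a‖ ≤ (p : ℝ) := by
    rw [ha, norm_mul, norm_inv, ht, inv_one, one_mul]; exact hx₀
  have hta : t * a = x₀ := by
    rw [ha, ← mul_assoc, mul_inv_cancel₀ htne, one_mul]
  have hpm : (p : ℝ) ≤ (p : ℝ) ^ m := by
    calc (p : ℝ) = (p : ℝ) ^ 1 := (pow_one _).symm
      _ ≤ (p : ℝ) ^ m := pow_le_pow_right₀ (le_of_lt hp1) hm
  have hamem : ‖a‖ ≤ (p : ℝ) ^ m := le_trans hanorm hpm
  set e : ℚ_[p] ≃ᵐ ℚ_[p] := (Homeomorph.addLeft a).toMeasurableEquiv with he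
  have hcoe : (⇑e : ℚ_[p] → ℚ_[p]) = (a + ·) := by
    rw [he, Homeomorph.toMeasurableEquiv_coe, Homeomorph.coe_addLeft]
  have hmap : ν.map ⇑e = ν := by
    rw [hcoe]
    exact Measure.IsAddLeftInvariant.map_add_left_eq_self a
  have hpre : (⇑e) ⁻¹' CB p m = CB p m := by
    ext x
    simp only [Set.mem_preimage, CB, Set.mem_setOf_eq]
    rw [show e x = a + x from congrFun hcoe x]
    constructor
    · intro h
      have hx2 : x = (a + x) + (-a) := by ring
      rw [hx2]
      refine le_trans (Padic.nonarchimedean _ _) (max_le h ?_)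
      rw [norm_neg]; exact hamem
    · intro h
      exact le_trans (Padic.nonarchimedean _ _) (max_le hamem h)
  set I := ∫ y in CB p m, ψ (t * y) ∂ν with hI
  have key : I = ψ x₀ * I := by
    conv_lhs => rw [hI, ← hmap]
    rw [setIntegral_map_equiv, hpre]
    have : ∀ y, ψ (t * (e y)) = ψ x₀ * ψ (t * y) := by
      intro y
      rw [show e y = a + y from congrFun hcoe y, mul_add, hψadd, hta]
    simp only [this]
    rw [integral_const_mul]
  have h0 : (1 - ψ x₀) * I = 0 := by rw [sub_mul, one_mul]; nth_rewrite 1 [key]; ring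
  rcases mul_eq_zero.1 h0 with h | h
  · exact absurd (by linear_combination -h : ψ x₀ = 1) hx₀ne
  · exact h

lemma int_CB_split (hν : ν (CB p 0) = 1) (hψcont : Continuous ψ) {m : ℕ} (hm : 1 ≤ m) :
    ∫ y in CB p m, ψ (t * y) ∂ν
      = (∫ y in CB p (m - 1), ψ (t * y) ∂ν) + ∫ y in Sph p m, ψ (t * y) ∂ν := by
  have hU : CB p (m - 1) ∪ Sph p m = CB p m := by
    rw [Sph_eq_diff hm, Set.union_diff_cancel (CB_mono (Nat.sub_le m 1))]
  rw [← hU, setIntegral_union ?hd ?hm ?h1 ?h2]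
  case hd => rw [Sph_eq_diff hm]; exact Set.disjoint_sdiff_right
  case hm => exact measurableSet_Sph m
  case h1 => exact integrableOn_char ν hψcont (isCompact_CB (m-1))
  case h2 => exact integrableOn_char ν hψcont (isCompact_Sph m)

lemma int_Sph_one (hν : ν (CB p 0) = 1)
    (hψcont : Continuous ψ) (hψadd : ∀ x y : ℚ_[p], ψ (x + y) = ψ x * ψ y)
    (hψtriv : ∀ x : ℚ_[p], ‖x‖ ≤ 1 → ψ x = 1)
    {x₀ : ℚ_[p]} (hx₀ : ‖x₀‖ ≤ (p : ℝ)) (hx₀ne : ψ x₀ ≠ 1)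
    (ht : ‖t‖ = 1) :
    ∫ y in Sph p 1, ψ (t * y) ∂ν = -1 := by
  have h := int_CB_split (t := t) ν hν hψcont (le_refl 1)
  rw [int_CB_eq_zero ν hν hψcont hψadd hx₀ hx₀ne ht (le_refl 1)] at h
  simp only [Nat.sub_self] at h
  rw [int_CB_zero_exp ν hν hψtriv (le_of_eq ht)] at h
  linear_combination -h

lemma int_Sph_ge_two (hν : ν (CB p 0) = 1)
    (hψcont : Continuous ψ) (hψadd : ∀ x y : ℚ_[p], ψ (x + y) = ψ x * ψ y)
    {x₀ : ℚ_[p]} (hx₀ : ‖x₀‖ ≤ (p : ℝ)) (hx₀ne : ψ x₀ ≠ 1)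
    (ht : ‖t‖ = 1) {m : ℕ} (hm : 2 ≤ m) :
    ∫ y in Sph p m, ψ (t * y) ∂ν = 0 := by
  have h := int_CB_split (t := t) ν hν hψcont (le_trans one_le_two hm)
  rw [int_CB_eq_zero ν hν hψcont hψadd hx₀ hx₀ne ht (le_trans one_le_two hm),
    int_CB_eq_zero ν hν hψcont hψadd hx₀ hx₀ne ht (by omega : 1 ≤ m - 1)] at h
  linear_combination -h

end CharInt

section Product

/-- The normalized Haar measure on `ℚ_[p]` giving mass 1 to `ℤ_p`. -/
noncomputable def Kcpt (p : ℕ) [Fact p.Prime] : TopologicalSpace.PositiveCompacts ℚ_[p] where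
  carrier := CB p 0
  isCompact' := isCompact_CB 0
  interior_nonempty' := by
    refine ⟨0, ?_⟩
    rw [mem_interior]
    refine ⟨Metric.ball 0 1, ?_, Metric.isOpen_ball, Metric.mem_ball_self one_pos⟩
    intro x hx
    simp only [Metric.mem_ball, dist_zero_right] at hx
    simp only [CB, Set.mem_setOf_eq, pow_zero]
    exact le_of_lt hx

noncomputable def nu (p : ℕ) [Fact p.Prime] : Measure ℚ_[p] :=
  Measure.addHaarMeasure (Kcpt p)

instance (p : ℕ) [Fact p.Prime] : (nu p).IsAddHaarMeasure :=
  Measure.isAddHaarMeasure_addHaarMeasure _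

lemma nu_CB0 : nu p (CB p 0) = 1 := Measure.addHaarMeasure_self

/-- Fubini for a function of the first coordinate over a product set. -/
lemma int_prod_fst {A B : Set ℚ_[p]} (hA : MeasurableSet A) (hB : MeasurableSet B)
    (hAfin : nu p A ≠ ⊤) (hBfin : nu p B ≠ ⊤) (f : ℚ_[p] → ℂ) (hf : Continuous f)
    (hfb : ∀ x, ‖f x‖ ≤ 1) :
    ∫ y in A ×ˢ B, f y.1 ∂((nu p).prod (nu p))
      = (nu p B).toReal • ∫ y in A, f y ∂(nu p) := by
  rw [← Measure.prod_restrict]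
  haveI : IsFiniteMeasure ((nu p).restrict A) :=
    ⟨by rw [Measure.restrict_apply_univ]; exact lt_top_iff_ne_top.2 hAfin⟩
  haveI : IsFiniteMeasure ((nu p).restrict B) :=
    ⟨by rw [Measure.restrict_apply_univ]; exact lt_top_iff_ne_top.2 hBfin⟩
  have hint : Integrable (fun y : ℚ_[p] × ℚ_[p] => f y.1)
      (((nu p).restrict A).prod ((nu p).restrict B)) := by
    refine Integrable.mono' (integrable_const (1 : ℝ))
      ((hf.comp continuous_fst).aestronglyMeasurable) ?_
    filter_upwards with y
    exact hfb _
  rw [integral_prod _ hint]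
  simp only [integral_const, measureReal_def, Measure.restrict_apply_univ]
  rw [integral_smul]

end Product

section ChangeVar

/-- nonarchimedean bound for integer combinations. -/
lemma norm_comb_le (e f : ℤ) (z w : ℚ_[p]) :
    ‖(e : ℚ_[p]) * z + (f : ℚ_[p]) * w‖ ≤ max ‖z‖ ‖w‖ := by
  refine le_trans (Padic.nonarchimedean _ _) (max_le ?_ ?_)
  · refine le_trans ?_ (le_max_left ‖z‖ ‖w‖)
    rw [norm_mul]
    calc ‖(e : ℚ_[p])‖ * ‖z‖ ≤ 1 * ‖z‖ :=
          mul_le_mul_of_nonneg_right (Padic.norm_int_le_one e) (norm_nonneg _)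
      _ = ‖z‖ := one_mul _
  · refine le_trans ?_ (le_max_right ‖z‖ ‖w‖)
    rw [norm_mul]
    calc ‖(f : ℚ_[p])‖ * ‖w‖ ≤ 1 * ‖w‖ :=
          mul_le_mul_of_nonneg_right (Padic.norm_int_le_one f) (norm_nonneg _)
      _ = ‖w‖ := one_mul _

variable {A B u v : ℤ}

/-- the unimodular change of variables as a function. -/
noncomputable def Mfun (p : ℕ) [Fact p.Prime] (A B u v : ℤ) (y : ℚ_[p] × ℚ_[p]) : ℚ_[p] × ℚ_[p] :=
  ((u : ℚ_[p]) * y.1 - (B : ℚ_[p]) * y.2, (v : ℚ_[p]) * y.1 + (A : ℚ_[p]) * y.2)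

lemma Mfun_fst_comb (h : u * A + v * B = 1) (y : ℚ_[p] × ℚ_[p]) :
    (A : ℚ_[p]) * (Mfun p A B u v y).1 + (B : ℚ_[p]) * (Mfun p A B u v y).2 = y.1 := by
  have hQ : (u : ℚ_[p]) * (A : ℚ_[p]) + (v : ℚ_[p]) * (B : ℚ_[p]) = 1 := by
    exact_mod_cast congrArg (fun n : ℤ => (n : ℚ_[p])) h
  simp only [Mfun]
  linear_combination y.1 * hQ

lemma Mfun_snd_comb (h : u * A + v * B = 1) (y : ℚ_[p] × ℚ_[p]) :
    ((-v : ℤ) : ℚ_[p]) * (Mfun p A B u v y).1 + (u : ℚ_[p]) * (Mfun p A B u v y).2 = y.2 := by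
  have hQ : (u : ℚ_[p]) * (A : ℚ_[p]) + (v : ℚ_[p]) * (B : ℚ_[p]) = 1 := by
    exact_mod_cast congrArg (fun n : ℤ => (n : ℚ_[p])) h
  simp only [Mfun]
  push_cast
  linear_combination y.2 * hQ

lemma Mfun_max_norm (h : u * A + v * B = 1) (y : ℚ_[p] × ℚ_[p]) :
    max ‖(Mfun p A B u v y).1‖ ‖(Mfun p A B u v y).2‖ = max ‖y.1‖ ‖y.2‖ := by
  apply le_antisymm
  · apply max_le
    · have : (Mfun p A B u v y).1 = (u : ℚ_[p]) * y.1 + ((-B : ℤ) : ℚ_[p]) * y.2 := by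
        simp only [Mfun]; push_cast; ring
      rw [this]
      exact norm_comb_le u (-B) y.1 y.2
    · exact norm_comb_le v A y.1 y.2
  · apply max_le
    · rw [← Mfun_fst_comb h y]
      exact norm_comb_le A B _ _
    · rw [← Mfun_snd_comb h y]
      exact norm_comb_le (-v) u _ _

lemma Mfun_continuous : Continuous (Mfun p A B u v) := by
  unfold Mfun
  fun_prop

/-- the change of variables as an additive equivalence. -/
noncomputable def Mequiv (p : ℕ) [Fact p.Prime] (A B u v : ℤ) (h : u * A + v * B = 1) :
    (ℚ_[p] × ℚ_[p]) ≃+ (ℚ_[p] × ℚ_[p]) where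
  toFun := Mfun p A B u v
  invFun y := ((A : ℚ_[p]) * y.1 + (B : ℚ_[p]) * y.2, -(v : ℚ_[p]) * y.1 + (u : ℚ_[p]) * y.2)
  left_inv y := by
    have hQ : (u : ℚ_[p]) * (A : ℚ_[p]) + (v : ℚ_[p]) * (B : ℚ_[p]) = 1 := by
      exact_mod_cast congrArg (fun n : ℤ => (n : ℚ_[p])) h
    apply Prod.ext
    · simp only [Mfun]; linear_combination y.1 * hQ
    · simp only [Mfun]; linear_combination y.2 * hQ
  right_inv y := by
    have hQ : (u : ℚ_[p]) * (A : ℚ_[p]) + (v : ℚ_[p]) * (B : ℚ_[p]) = 1 := by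
      exact_mod_cast congrArg (fun n : ℤ => (n : ℚ_[p])) h
    apply Prod.ext
    · simp only [Mfun]; linear_combination y.1 * hQ
    · simp only [Mfun]; linear_combination y.2 * hQ
  map_add' y z := by
    apply Prod.ext <;> · simp only [Mfun, Prod.fst_add, Prod.snd_add]; push_cast; ring

/-- the change of variables as a measurable equivalence. -/
noncomputable def Mme (p : ℕ) [Fact p.Prime] (A B u v : ℤ) (h : u * A + v * B = 1) :
    (ℚ_[p] × ℚ_[p]) ≃ᵐ (ℚ_[p] × ℚ_[p]) :=
  Homeomorph.toMeasurableEquiv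
    { toEquiv := (Mequiv p A B u v h).toEquiv
      continuous_toFun := Mfun_continuous
      continuous_invFun := by
        show Continuous fun y : ℚ_[p] × ℚ_[p] =>
          ((A : ℚ_[p]) * y.1 + (B : ℚ_[p]) * y.2, -(v : ℚ_[p]) * y.1 + (u : ℚ_[p]) * y.2)
        fun_prop }

lemma Mme_coe (h : u * A + v * B = 1) : ⇑(Mme p A B u v h) = Mfun p A B u v := rfl

/-- pushforward of any Haar measure with total unit-ball mass 1 under `Mme` is itself. -/
lemma map_Mme (h : u * A + v * B = 1) (νν : Measure (ℚ_[p] × ℚ_[p])) [νν.IsAddHaarMeasure]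
    (hBset : νν ((CB p 0) ×ˢ (CB p 0)) = 1) :
    νν.map (Mme p A B u v h) = νν := by
  haveI : (νν.map (Mme p A B u v h)).IsAddHaarMeasure := by
    have := AddEquiv.isAddHaarMeasure_map νν (Mequiv p A B u v h)
      Mfun_continuous (by
        show Continuous fun y : ℚ_[p] × ℚ_[p] =>
          ((A : ℚ_[p]) * y.1 + (B : ℚ_[p]) * y.2, -(v : ℚ_[p]) * y.1 + (u : ℚ_[p]) * y.2)
        fun_prop)
    exact this
  have huniq := Measure.isAddLeftInvariant_eq_smul (νν.map (Mme p A B u v h)) νν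
  have hpre : (Mme p A B u v h) ⁻¹' ((CB p 0) ×ˢ (CB p 0)) = (CB p 0) ×ˢ (CB p 0) := by
    ext y
    simp only [Set.mem_preimage, Set.mem_prod, CB, Set.mem_setOf_eq, pow_zero, Mme_coe]
    rw [← max_le_iff, ← max_le_iff, Mfun_max_norm h]
  have hmeasB : MeasurableSet ((CB p 0) ×ˢ (CB p 0) : Set (ℚ_[p] × ℚ_[p])) :=
    (measurableSet_CB 0).prod (measurableSet_CB 0)
  have happ : (νν.map (Mme p A B u v h)) ((CB p 0) ×ˢ (CB p 0)) = 1 := by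
    rw [Measure.map_apply (Mme p A B u v h).measurable hmeasB, hpre, hBset]
  rw [huniq] at happ ⊢
  rw [Measure.smul_apply, hBset] at happ
  have hc : (νν.map (Mme p A B u v h)).addHaarScalarFactor νν = 1 := by
    rw [ENNReal.smul_def, smul_eq_mul, mul_one] at happ
    exact_mod_cast happ
  rw [hc, one_smul]

end ChangeVar

end Stmt11

open Stmt11 in
/-- Integrals of a character special for `ℓ_k` over the pieces
`U_k(α,β)` and `U_k(α)` at a prime `p` of good reduction. -/
theorem stmt11 (r : ℕ) (hr : 1 ≤ r) (a b : Fin r → ℤ)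
    (hprim : ∀ k, Int.gcd (a k) (b k) = 1)
    (hnonprop : ∀ j k, j ≠ k → a j * b k - a k * b j ≠ 0)
    (p : ℕ) [Fact p.Prime]
    (hpS : ∀ j k, j ≠ k → ¬ ((p : ℤ) ∣ (a j * b k - a k * b j)))
    (μ : Measure (ℚ_[p] × ℚ_[p])) (hμ : μ.IsAddHaarMeasure)
    (hμ1 : μ {x | ‖x.1‖ ≤ 1 ∧ ‖x.2‖ ≤ 1} = 1)
    (ψ : ℚ_[p] → ℂ) (hψcont : Continuous ψ)
    (hψadd : ∀ x y : ℚ_[p], ψ (x + y) = ψ x * ψ y)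
    (hψabs : ∀ x : ℚ_[p], ‖ψ x‖ = 1)
    (hψtriv : ∀ x : ℚ_[p], ‖x‖ ≤ 1 → ψ x = 1)
    (hψnontriv : ∃ x : ℚ_[p], ‖x‖ ≤ (p : ℝ) ∧ ψ x ≠ 1)
    (k : Fin r) (c : ℤ × ℤ) (hc0 : c ≠ 0)
    (hspec : c.1 * b k = c.2 * a k)
    (hcp : ¬ ((p : ℤ) ∣ c.1 ∧ (p : ℤ) ∣ c.2)) :
    (∀ α β : ℕ, 1 ≤ β → β < α →
      (β = α - 1 →
        ∫ x in Uab p (a k) (b k) α β,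
          ψ ((c.1 : ℚ_[p]) * x.1 + (c.2 : ℚ_[p]) * x.2) ∂μ =
            -((p : ℂ) ^ (α - 1) * ((p : ℂ) - 1))) ∧
      (β ≠ α - 1 →
        ∫ x in Uab p (a k) (b k) α β,
          ψ ((c.1 : ℚ_[p]) * x.1 + (c.2 : ℚ_[p]) * x.2) ∂μ = 0)) ∧
    (∀ α : ℕ, 1 ≤ α →
      ∫ x in Ua p (a k) (b k) α,
        ψ ((c.1 : ℚ_[p]) * x.1 + (c.2 : ℚ_[p]) * x.2) ∂μ =
          (p : ℂ) ^ (α - 1) * ((p : ℂ) - 1)) := by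
  haveI := hμ
  -- Bezout coefficients
  obtain ⟨u, v, hbez⟩ := Int.isCoprime_iff_gcd_eq_one.2 (hprim k)
  -- the integer `t` with `c = t • (a k, b k)`
  set t : ℤ := u * c.1 + v * c.2 with htdef
  have htA : t * a k = c.1 := by linear_combination c.1 * hbez - v * hspec
  have htB : t * b k = c.2 := by linear_combination c.2 * hbez + u * hspec
  have hpt : ¬ (p : ℤ) ∣ t := by
    intro hdvd
    exact hcp ⟨htA ▸ hdvd.mul_right (a k), htB ▸ hdvd.mul_right (b k)⟩
  have htnorm : ‖(t : ℚ_[p])‖ = 1 := by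
    refine le_antisymm (Padic.norm_int_le_one t) ?_
    by_contra hcon
    push_neg at hcon
    exact hpt (Padic.norm_intCast_lt_one_iff.1 hcon)
  obtain ⟨x₀, hx₀, hx₀ne⟩ := hψnontriv
  have hψb : ∀ x : ℚ_[p], ‖ψ x‖ ≤ 1 := fun x =>
    le_of_eq (hψabs x)
  set νν : Measure (ℚ_[p] × ℚ_[p]) := (nu p).prod (nu p) with hννdef
  have hBset : {x : ℚ_[p] × ℚ_[p] | ‖x.1‖ ≤ 1 ∧ ‖x.2‖ ≤ 1} = (CB p 0) ×ˢ (CB p 0) := by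
    ext x
    simp [CB, Set.mem_prod]
  have hννB : νν ((CB p 0) ×ˢ (CB p 0)) = 1 := by
    rw [hννdef, Measure.prod_prod, nu_CB0, mul_one]
  -- identify μ with the product measure
  have hμνν : μ = νν := by
    have huniq := Measure.isAddLeftInvariant_eq_smul μ νν
    have happ : (μ.addHaarScalarFactor νν) • νν ((CB p 0) ×ˢ (CB p 0)) = 1 := by
      rw [← Measure.smul_apply, ← huniq, ← hBset]
      exact hμ1
    have hc : μ.addHaarScalarFactor νν = 1 := by
      rw [hννB, ENNReal.smul_def, smul_eq_mul, mul_one] at happ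
      exact_mod_cast happ
    rw [huniq, hc, one_smul]
  -- the change of variables
  set e := Mme p (a k) (b k) u v hbez with hedef
  have hmapM : νν.map e = νν := map_Mme hbez νν hννB
  have hey : ∀ y : ℚ_[p] × ℚ_[p], e y = Mfun p (a k) (b k) u v y := fun y =>
    congrFun (Mme_coe hbez) y
  have hgM : ∀ y : ℚ_[p] × ℚ_[p],
      ψ ((c.1 : ℚ_[p]) * (e y).1 + (c.2 : ℚ_[p]) * (e y).2) = ψ ((t : ℚ_[p]) * y.1) := by
    intro y
    congr 1
    have h1 := Mfun_fst_comb (p := p) hbez y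
    have hc1 : (c.1 : ℚ_[p]) = (t : ℚ_[p]) * (a k : ℚ_[p]) := by exact_mod_cast htA.symm
    have hc2 : (c.2 : ℚ_[p]) = (t : ℚ_[p]) * (b k : ℚ_[p]) := by exact_mod_cast htB.symm
    rw [hey y, hc1, hc2, mul_assoc, mul_assoc, ← mul_add, h1]
  -- the master reduction
  have key : ∀ (U : Set (ℚ_[p] × ℚ_[p])) (S1 S2 : Set ℚ_[p]), MeasurableSet S1 →
      MeasurableSet S2 → nu p S1 ≠ ⊤ → nu p S2 ≠ ⊤ → (⇑e ⁻¹' U = S1 ×ˢ S2) →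
      ∫ x in U, ψ ((c.1 : ℚ_[p]) * x.1 + (c.2 : ℚ_[p]) * x.2) ∂μ
        = (nu p S2).toReal • ∫ y in S1, ψ ((t : ℚ_[p]) * y) ∂(nu p) := by
    intro U S1 S2 hS1 hS2 hS1f hS2f hpre
    rw [hμνν, ← hmapM, setIntegral_map_equiv, hpre]
    have : ∀ y : ℚ_[p] × ℚ_[p], y ∈ S1 ×ˢ S2 →
        ψ ((c.1 : ℚ_[p]) * (e y).1 + (c.2 : ℚ_[p]) * (e y).2) = ψ ((t : ℚ_[p]) * y.1) :=
      fun y _ => hgM y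
    rw [setIntegral_congr_fun (hS1.prod hS2) this]
    exact int_prod_fst hS1 hS2 hS1f hS2f (fun z => ψ ((t : ℚ_[p]) * z))
      (hψcont.comp (continuous_mul_left (t : ℚ_[p]))) (fun x => hψb _)
  -- preimage identities
  have hUab : ∀ α β : ℕ, 1 ≤ β → β < α →
      ⇑e ⁻¹' Uab p (a k) (b k) α β = Sph p (α - β) ×ˢ Sph p α := by
    intro α β hβ hβα
    have hlt : (p : ℝ) ^ (α - β) < (p : ℝ) ^ α := pow_lt_pow_right₀ hp1 (by omega)
    ext y
    simp only [Set.mem_preimage, Uab, Set.mem_setOf_eq, Set.mem_prod, Sph]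
    rw [hey y, Mfun_max_norm hbez y, Mfun_fst_comb hbez y]
    constructor
    · rintro ⟨hmax, hfst⟩
      refine ⟨hfst, ?_⟩
      rcases max_cases ‖y.1‖ ‖y.2‖ with ⟨hc', _⟩ | ⟨hc', _⟩
      · rw [hc', hfst] at hmax
        exact absurd hmax (ne_of_lt hlt)
      · rw [hc'] at hmax
        exact hmax
    · rintro ⟨h1', h2'⟩
      exact ⟨by rw [h1', h2']; exact max_eq_right (le_of_lt hlt), h1'⟩
  have hUa : ∀ α : ℕ, 1 ≤ α →
      ⇑e ⁻¹' Ua p (a k) (b k) α = CB p 0 ×ˢ Sph p α := by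
    intro α hα
    have hlt : (1 : ℝ) < (p : ℝ) ^ α := one_lt_pow₀ hp1 (by omega)
    ext y
    simp only [Set.mem_preimage, Ua, Set.mem_setOf_eq, Set.mem_prod, Sph, CB, pow_zero]
    rw [hey y, Mfun_max_norm hbez y, Mfun_fst_comb hbez y]
    constructor
    · rintro ⟨hmax, hfst⟩
      refine ⟨hfst, ?_⟩
      rcases max_cases ‖y.1‖ ‖y.2‖ with ⟨hc', _⟩ | ⟨hc', _⟩
      · rw [hc'] at hmax
        rw [hmax] at hfst
        exact absurd hfst (not_le.2 hlt)
      · rw [hc'] at hmax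
        exact hmax
    · rintro ⟨h1', h2'⟩
      exact ⟨by rw [h2']; exact max_eq_right (le_trans h1' (le_of_lt hlt)), h1'⟩
  refine ⟨fun α β hβ hβα => ⟨fun hcase => ?_, fun hcase => ?_⟩, fun α hα => ?_⟩
  · -- β = α - 1
    have hαβ1 : α - β = 1 := by omega
    rw [key (Uab p (a k) (b k) α β) (Sph p (α - β)) (Sph p α)
        (measurableSet_Sph _) (measurableSet_Sph _)
        (measure_Sph_ne_top (nu p) nu_CB0 _) (measure_Sph_ne_top (nu p) nu_CB0 _)
        (hUab α β hβ hβα), hαβ1,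
      int_Sph_one (nu p) nu_CB0 hψcont hψadd hψtriv hx₀ hx₀ne htnorm,
      measure_Sph_toReal (nu p) nu_CB0 (by omega : 1 ≤ α)]
    have hγ : α = (α - 1) + 1 := by omega
    rw [Complex.real_smul]
    push_cast
    rw [hγ]
    simp only [Nat.add_sub_cancel]
    ring
  · -- β ≠ α - 1
    have hαβ2 : 2 ≤ α - β := by omega
    rw [key (Uab p (a k) (b k) α β) (Sph p (α - β)) (Sph p α)
        (measurableSet_Sph _) (measurableSet_Sph _)
        (measure_Sph_ne_top (nu p) nu_CB0 _) (measure_Sph_ne_top (nu p) nu_CB0 _)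
        (hUab α β hβ hβα),
      int_Sph_ge_two (nu p) nu_CB0 hψcont hψadd hx₀ hx₀ne htnorm hαβ2, smul_zero]
  · -- the set `Ua`
    rw [key (Ua p (a k) (b k) α) (CB p 0) (Sph p α)
        (measurableSet_CB _) (measurableSet_Sph _)
        (measure_CB_ne_top (nu p) nu_CB0 _) (measure_Sph_ne_top (nu p) nu_CB0 _)
        (hUa α hα),
      int_CB_zero_exp (nu p) nu_CB0 hψtriv (le_of_eq htnorm),
      measure_Sph_toReal (nu p) nu_CB0 (by omega : 1 ≤ α)]
    have hγ : α = (α - 1) + 1 := by omega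
    rw [Complex.real_smul]
    push_cast
    rw [hγ]
    simp only [Nat.add_sub_cancel]
    ring
end
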